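/- Suppose the metric d on X is bounded. Then d_E is a metric on E if and only if θ = (sup d)/M ≤ 2. -/

import Mathlib

/-- `ρ` is a metric: zero iff equal, symmetric, triangle inequality. -/
def IsMetric {α : Type*} (ρ : α → α → ℝ) : Prop :=
  (∀ x y, ρ x y = 0 ↔ x = y) ∧ (∀ x y, ρ x y = ρ y x) ∧
    ∀ x y z, ρ x z ≤ ρ x y + ρ y z

def IsCauchyWith {α : Type*} (ρ : α → α → ℝ) (S : ℕ → α) : Prop :=
  ∀ ε : ℝ, 0 < ε → ∃ N : ℕ, ∀ m ≥ N, ∀ n ≥ N, ρ (S m) (S n) < ε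

def TendsToWith {α : Type*} (ρ : α → α → ℝ) (S : ℕ → α) (l : α) : Prop :=
  ∀ ε : ℝ, 0 < ε → ∃ N : ℕ, ∀ n ≥ N, ρ (S n) l < ε

def IsCompleteWith {α : Type*} (ρ : α → α → ℝ) : Prop :=
  ∀ S : ℕ → α, IsCauchyWith ρ S → ∃ l, TendsToWith ρ S l

/-- the topology generated by the open balls of `ρ` -/
def topOf {α : Type*} (ρ : α → α → ℝ) : TopologicalSpace α :=
  TopologicalSpace.generateFrom {s | ∃ (x : α) (ε : ℝ), s = {y | ρ x y < ε}}

/-- `sup d`, the supremum of all distances in `X` -/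
noncomputable def supD (X : Type*) [MetricSpace X] : ℝ :=
  sSup {r : ℝ | ∃ x y : X, dist x y = r}

/-- The multiset distance `d_E`: enumerate `a` and `c` with multiplicity in all possible
orders; the shorter enumeration is matched against an initial part of the other, taking
the sum of the distances of matched pairs plus the notional part `M * |C(c) - C(a)|`;
`d_E` is the least such value. -/
noncomputable def dE {X : Type*} [MetricSpace X] (M : ℝ) (a c : Multiset X) : ℝ :=
  sInf {r : ℝ | ∃ la lc : List X, (la : Multiset X) = a ∧ (lc : Multiset X) = c ∧
    r = (List.zipWith dist la lc).sum + M * |(c.card : ℝ) - (a.card : ℝ)|}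

/-- `d_Em`, the mean version of `d_E` (equal to `0` on the pair of empty multisets). -/
noncomputable def dEm {X : Type*} [MetricSpace X] (M : ℝ) (a c : Multiset X) : ℝ :=
  dE M a c / (max a.card c.card : ℕ)


noncomputable section
namespace DEwork
variable {X : Type*} [MetricSpace X]

/-- matching cost of two enumerations -/
def mcost (M : ℝ) (la lc : List X) : ℝ :=
  (List.zipWith dist la lc).sum + M * |(lc.length : ℝ) - (la.length : ℝ)|

theorem dE_eq (M : ℝ) (a c : Multiset X) :
    dE M a c = sInf {r : ℝ | ∃ la lc : List X, (la : Multiset X) = a ∧ (lc : Multiset X) = c ∧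
      r = mcost M la lc} := by
  unfold dE
  congr 1
  ext r
  constructor <;> rintro ⟨la, lc, h1, h2, h3⟩ <;>
    exact ⟨la, lc, h1, h2, by subst h1 h2 h3; simp [mcost, Multiset.coe_card]⟩

theorem setOf_finite (M : ℝ) (a c : Multiset X) :
    {r : ℝ | ∃ la lc : List X, (la : Multiset X) = a ∧ (lc : Multiset X) = c ∧
      r = mcost M la lc}.Finite := by
  apply Set.Finite.subset (Set.Finite.image (fun p : List X × List X => mcost M p.1 p.2)
    (Set.Finite.prod (a.toList.permutations.finite_toSet) (c.toList.permutations.finite_toSet)))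
  rintro r ⟨la, lc, h1, h2, rfl⟩
  refine ⟨(la, lc), ⟨?_, ?_⟩, rfl⟩
  · exact List.mem_permutations.mpr (Multiset.coe_eq_coe.mp (h1.trans a.coe_toList.symm))
  · exact List.mem_permutations.mpr (Multiset.coe_eq_coe.mp (h2.trans c.coe_toList.symm))

theorem setOf_nonempty (M : ℝ) (a c : Multiset X) :
    {r : ℝ | ∃ la lc : List X, (la : Multiset X) = a ∧ (lc : Multiset X) = c ∧
      r = mcost M la lc}.Nonempty :=
  ⟨mcost M a.toList c.toList, a.toList, c.toList, a.coe_toList, c.coe_toList, rfl⟩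

theorem dE_le (M : ℝ) {a c : Multiset X} {la lc : List X} (h1 : (la : Multiset X) = a)
    (h2 : (lc : Multiset X) = c) : dE M a c ≤ mcost M la lc := by
  rw [dE_eq]
  exact csInf_le (setOf_finite M a c).bddBelow ⟨la, lc, h1, h2, rfl⟩

theorem dE_mem (M : ℝ) (a c : Multiset X) :
    ∃ la lc : List X, (la : Multiset X) = a ∧ (lc : Multiset X) = c ∧
      dE M a c = mcost M la lc := by
  rw [dE_eq]
  exact (setOf_nonempty M a c).csInf_mem (setOf_finite M a c)

theorem zip_sum_nonneg : ∀ (la lc : List X), 0 ≤ (List.zipWith dist la lc).sum := by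
  intro la
  induction la with
  | nil => intro lc; simp
  | cons x t ih =>
    intro lc
    cases lc with
    | nil => simp
    | cons y tc => simpa using add_nonneg dist_nonneg (ih tc)

theorem mcost_nonneg {M : ℝ} (hM : 0 ≤ M) (la lc : List X) : 0 ≤ mcost M la lc :=
  add_nonneg (zip_sum_nonneg la lc) (mul_nonneg hM (abs_nonneg _))

theorem dE_nonneg {M : ℝ} (hM : 0 ≤ M) (a c : Multiset X) : 0 ≤ dE M a c := by
  obtain ⟨la, lc, _, _, h⟩ := dE_mem M a c
  rw [h]; exact mcost_nonneg hM la lc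

theorem dE_self {M : ℝ} (hM : 0 ≤ M) (a : Multiset X) : dE M a a = 0 := by
  refine le_antisymm ?_ (dE_nonneg hM a a)
  have := dE_le M (a := a) (c := a) a.coe_toList a.coe_toList
  refine this.trans_eq ?_
  have : ∀ l : List X, (List.zipWith dist l l).sum = 0 := by
    intro l; induction l with
    | nil => simp
    | cons x t ih => simp [ih]
  simp [mcost, this]

theorem dE_comm (M : ℝ) (a c : Multiset X) : dE M a c = dE M c a := by
  rw [dE_eq, dE_eq]
  congr 1
  ext r
  constructor <;> rintro ⟨la, lc, h1, h2, rfl⟩ <;>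
    exact ⟨lc, la, h2, h1, by
      simp [mcost, List.zipWith_comm_of_comm (fun x y => dist_comm x y), abs_sub_comm]⟩

theorem zip_eq_of : ∀ (la lc : List X), (List.zipWith dist la lc).sum = 0 →
    la.length = lc.length → la = lc := by
  intro la
  induction la with
  | nil => intro lc _ hlen; cases lc with
    | nil => rfl
    | cons y t => simp at hlen
  | cons x t ih =>
    intro lc hs hlen
    cases lc with
    | nil => simp at hlen
    | cons y tc =>
      simp only [List.zipWith_cons_cons, List.sum_cons] at hs
      have h1 : (0:ℝ) ≤ dist x y := dist_nonneg
      have h2 : 0 ≤ (List.zipWith dist t tc).sum := zip_sum_nonneg t tc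
      have hxy : dist x y = 0 := by linarith
      have hx : x = y := by rwa [dist_eq_zero] at hxy
      subst hx
      rw [ih tc (by linarith) (by simpa using hlen)]

theorem dE_eq_zero {M : ℝ} (hM : 0 < M) {a c : Multiset X} (h : dE M a c = 0) : a = c := by
  obtain ⟨la, lc, h1, h2, he⟩ := dE_mem M a c
  rw [h] at he
  have hz := zip_sum_nonneg la lc
  have hn : 0 ≤ M * |(lc.length : ℝ) - (la.length : ℝ)| := mul_nonneg hM.le (abs_nonneg _)
  have hs : (List.zipWith dist la lc).sum = 0 := by unfold mcost at he; linarith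
  have hd : M * |(lc.length : ℝ) - (la.length : ℝ)| = 0 := by unfold mcost at he; linarith
  have hd2 : |(lc.length : ℝ) - (la.length : ℝ)| = 0 :=
    (mul_eq_zero.mp hd).resolve_left (ne_of_gt hM)
  have hlen : la.length = lc.length := by
    have := sub_eq_zero.mp (abs_eq_zero.mp hd2)
    exact_mod_cast this.symm
  rw [← h1, ← h2, zip_eq_of la lc hs hlen]
end DEwork
namespace DEwork
variable {X : Type*} [MetricSpace X]

-- helper: zipWith with appended singleton on the left, right list short
theorem zip_append_single_short : ∀ (la lc : List X) (x : X), lc.length ≤ la.length →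
    List.zipWith dist (la ++ [x]) lc = List.zipWith dist la lc := by
  intro la
  induction la with
  | nil =>
    intro lc x h
    have : lc = [] := List.length_eq_zero_iff.mp (Nat.le_zero.mp h)
    subst this; simp
  | cons a t ih =>
    intro lc x h
    cases lc with
    | nil => simp
    | cons c tc => simp [ih tc x (by simpa using h)]

theorem zip_take : ∀ (la lc : List X), List.zipWith dist la (lc.take la.length) =
    List.zipWith dist la lc := by
  intro la
  induction la with
  | nil => simp
  | cons a t ih =>
    intro lc
    cases lc with
    | nil => simp
    | cons c tc => simp [ih tc]

/-- appending one extra element costs at most M -/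
theorem mcost_append_single {M : ℝ} (hM : 0 ≤ M) (h2M : ∀ u v : X, dist u v ≤ 2 * M)
    (la lc : List X) (x : X) : mcost M (la ++ [x]) lc ≤ mcost M la lc + M := by
  unfold mcost
  rcases le_or_gt lc.length la.length with h | h
  · rw [zip_append_single_short la lc x h]
    have hr : (lc.length : ℝ) ≤ (la.length : ℝ) := by exact_mod_cast h
    have : |(lc.length : ℝ) - ((la ++ [x]).length : ℝ)| = |(lc.length : ℝ) - la.length| + 1 := by
      simp only [List.length_append, List.length_singleton]
      push_cast
      rw [abs_of_nonpos (by linarith), abs_of_nonpos (by linarith)]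
      ring
    rw [this]; nlinarith [abs_nonneg ((lc.length : ℝ) - la.length)]
  · -- la.length < lc.length : x gets matched to lc element at position la.length
    have hsplit : lc = lc.take la.length ++ lc.drop la.length := (List.take_append_drop _ _).symm
    have hlen : la.length = (lc.take la.length).length := by
      rw [List.length_take]; omega
    have : List.zipWith dist (la ++ [x]) lc
        = List.zipWith dist la (lc.take la.length) ++ List.zipWith dist [x] (lc.drop la.length) := by
      conv_lhs => rw [hsplit]
      exact List.zipWith_append hlen
    rw [this, List.sum_append, zip_take]
    have hdrop : ∃ y t, lc.drop la.length = y :: t := by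
      have : (lc.drop la.length).length = lc.length - la.length := List.length_drop
      rcases hd : lc.drop la.length with _ | ⟨y, t⟩
      · rw [hd] at this; simp at this; omega
      · exact ⟨y, t, rfl⟩
    obtain ⟨y, t, hy⟩ := hdrop
    have hsum : (List.zipWith dist [x] (lc.drop la.length)).sum ≤ 2 * M := by
      rw [hy]; simpa using h2M x y
    have hr : (la.length : ℝ) + 1 ≤ (lc.length : ℝ) := by exact_mod_cast h
    have habs : |(lc.length : ℝ) - ((la ++ [x]).length : ℝ)| = |(lc.length : ℝ) - la.length| - 1 := by
      simp only [List.length_append, List.length_singleton]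
      push_cast
      rw [abs_of_nonneg (by linarith), abs_of_nonneg (by linarith)]
      ring
    rw [habs]; nlinarith [abs_nonneg ((lc.length : ℝ) - la.length)]

theorem dE_cons_left {M : ℝ} (hM : 0 ≤ M) (h2M : ∀ u v : X, dist u v ≤ 2 * M)
    (x : X) (a c : Multiset X) : dE M (x ::ₘ a) c ≤ dE M a c + M := by
  obtain ⟨la, lc, h1, h2, he⟩ := dE_mem M a c
  have hco : ((la ++ [x] : List X) : Multiset X) = x ::ₘ a := by
    have : ((la ++ [x] : List X) : Multiset X) = ↑la + {x} := rfl
    rw [this, h1, add_comm, Multiset.singleton_add]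
  calc dE M (x ::ₘ a) c ≤ mcost M (la ++ [x]) lc := dE_le M hco h2
    _ ≤ mcost M la lc + M := mcost_append_single hM h2M la lc x
    _ = dE M a c + M := by rw [he]

theorem dE_cons_right {M : ℝ} (hM : 0 ≤ M) (h2M : ∀ u v : X, dist u v ≤ 2 * M)
    (y : X) (a c : Multiset X) : dE M a (y ::ₘ c) ≤ dE M a c + M := by
  rw [dE_comm M a (y ::ₘ c), dE_comm M a c]
  exact dE_cons_left hM h2M y c a

theorem dE_cons_cons (M : ℝ) (x y : X) (a c : Multiset X) :
    dE M (x ::ₘ a) (y ::ₘ c) ≤ dist x y + dE M a c := by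
  obtain ⟨la, lc, h1, h2, he⟩ := dE_mem M a c
  have hca : ((x :: la : List X) : Multiset X) = x ::ₘ a := by rw [← h1]; rfl
  have hcc : ((y :: lc : List X) : Multiset X) = y ::ₘ c := by rw [← h2]; rfl
  have : mcost M (x :: la) (y :: lc) = dist x y + mcost M la lc := by
    simp only [mcost, List.zipWith_cons_cons, List.sum_cons, List.length_cons]
    push_cast
    have : |(lc.length : ℝ) + 1 - (la.length + 1)| = |(lc.length : ℝ) - la.length| := by
      ring_nf
    rw [this]; ring
  calc dE M (x ::ₘ a) (y ::ₘ c) ≤ mcost M (x :: la) (y :: lc) := dE_le M hca hcc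
    _ = dist x y + dE M a c := by rw [this, he]

end DEwork
namespace DEwork
variable {X : Type*} [MetricSpace X]

/-- extended distance on `Option X`, `none` being a notional point at distance `M` -/
def D (M : ℝ) : Option X → Option X → ℝ
  | some x, some y => dist x y
  | some _, none => M
  | none, some _ => M
  | none, none => 0

theorem D_comm (M : ℝ) (u v : Option X) : D M u v = D M v u := by
  cases u <;> cases v <;> simp [D, dist_comm]

theorem D_triangle {M : ℝ} (hM : 0 ≤ M) (h2M : ∀ x y : X, dist x y ≤ 2 * M)
    (u v w : Option X) : D M u w ≤ D M u v + D M v w := by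
  rcases u with _ | x <;> rcases v with _ | y <;> rcases w with _ | z <;>
    simp [D] <;>
    first
      | exact dist_nonneg
      | exact dist_triangle x y z
      | linarith [h2M x z]
      | exact le_add_of_nonneg_right dist_nonneg
      | exact le_add_of_nonneg_left dist_nonneg
      | linarith

/-- padding a list with `none`s -/
def pad (l : List X) (k : ℕ) : List (Option X) := l.map some ++ List.replicate k none

theorem pad_length (l : List X) (k : ℕ) : (pad l k).length = l.length + k := by
  simp [pad]

theorem pad_filterMap (l : List X) (k : ℕ) : (pad l k).filterMap id = l := by
  induction l with
  | nil =>
    simp only [pad, List.map_nil, List.nil_append]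
    induction k with
    | zero => simp
    | succ n ih => simpa [List.replicate_succ] using ih
  | cons x t ih => simpa [pad] using ih

theorem rep_cost (M : ℝ) : ∀ (lc : List X) (k l : ℕ), k = lc.length + l →
    (List.zipWith (D M) (List.replicate k none) (pad lc l)).sum = M * lc.length := by
  intro lc
  induction lc with
  | nil =>
    intro k l h
    simp only [pad, List.map_nil, List.nil_append]
    rw [List.zipWith_replicate]
    simp [D]
  | cons y t ih =>
    intro k l h
    cases k with
    | zero => simp at h; omega
    | succ k' =>
      rw [List.replicate_succ]
      have hp : pad (y :: t) l = some y :: pad t l := by simp [pad]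
      rw [hp]
      simp only [List.zipWith_cons_cons, List.sum_cons]
      rw [ih k' l (by simp at h; omega)]
      show M + M * (t.length : ℝ) = M * ((y :: t).length : ℝ)
      simp [List.length_cons]; push_cast; ring

theorem pad_cost (M : ℝ) : ∀ (la lc : List X) (k l : ℕ), la.length + k = lc.length + l →
    (List.zipWith (D M) (pad la k) (pad lc l)).sum = mcost M la lc := by
  intro la
  induction la with
  | nil =>
    intro lc k l h
    have : pad ([] : List X) k = List.replicate k none := by simp [pad]
    rw [this, rep_cost M lc k l (by simpa using h)]
    simp [mcost]
  | cons x t ih =>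
    intro lc k l h
    cases lc with
    | nil =>
      have h1 : pad ([] : List X) l = List.replicate l none := by simp [pad]
      rw [h1]
      have h2 : (List.zipWith (D M) (pad (x :: t) k) (List.replicate l none)).sum
          = (List.zipWith (D M) (List.replicate l none) (pad (x :: t) k)).sum := by
        rw [List.zipWith_comm_of_comm (D_comm M)]
      rw [h2, rep_cost M (x :: t) l k (by simpa using h.symm)]
      simp only [mcost, List.zipWith_nil_right, List.sum_nil, List.length_nil, Nat.cast_zero,
        zero_add, zero_sub, abs_neg]
      rw [abs_of_nonneg (by positivity : (0:ℝ) ≤ ((x :: t).length : ℝ))]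
    | cons y tc =>
      have hp1 : pad (x :: t) k = some x :: pad t k := by simp [pad]
      have hp2 : pad (y :: tc) l = some y :: pad tc l := by simp [pad]
      rw [hp1, hp2]
      simp only [List.zipWith_cons_cons, List.sum_cons]
      rw [ih tc k l (by simp at h ⊢; omega)]
      show dist x y + mcost M t tc = mcost M (x :: t) (y :: tc)
      simp only [mcost, List.zipWith_cons_cons, List.sum_cons, List.length_cons]
      have : |((tc.length : ℝ) + 1) - ((t.length : ℝ) + 1)| = |(tc.length : ℝ) - t.length| := by
        ring_nf
      push_cast
      rw [this]; ring

end DEwork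
namespace DEwork
variable {X : Type*} [MetricSpace X]

theorem perm_zip (f : Option X → Option X → ℝ) {L1 L2 : List (Option X)} (h : L1.Perm L2) :
    ∀ C : List (Option X), C.length = L1.length →
      ∃ C', C'.Perm C ∧ (List.zipWith f L2 C').sum = (List.zipWith f L1 C).sum := by
  induction h with
  | nil =>
    intro C hC
    exact ⟨C, List.Perm.refl C, rfl⟩
  | cons x h ih =>
    intro C hC
    cases C with
    | nil => simp at hC
    | cons v C0 =>
      obtain ⟨C0', hp, hs⟩ := ih C0 (by simpa using hC)
      exact ⟨v :: C0', hp.cons v, by simp [hs]⟩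
  | swap x y l =>
    intro C hC
    cases C with
    | nil => simp at hC
    | cons c1 C1 =>
      cases C1 with
      | nil => simp at hC
      | cons c2 C0 =>
        refine ⟨c2 :: c1 :: C0, List.Perm.swap c1 c2 C0, ?_⟩
        simp only [List.zipWith_cons_cons, List.sum_cons]
        ring
  | trans h1 h2 ih1 ih2 =>
    intro C hC
    obtain ⟨C1, hp1, hs1⟩ := ih1 C hC
    obtain ⟨C2, hp2, hs2⟩ := ih2 C1 ((hp1.length_eq).trans (hC.trans h1.length_eq))
    exact ⟨C2, hp2.trans hp1, by rw [hs2, hs1]⟩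

theorem D_nonneg {M : ℝ} (hM : 0 ≤ M) (u v : Option X) : 0 ≤ D M u v := by
  cases u <;> cases v <;> simp [D] <;> first | exact dist_nonneg | exact hM

theorem zipD_sum_nonneg {M : ℝ} (hM : 0 ≤ M) :
    ∀ (la lc : List (Option X)), 0 ≤ (List.zipWith (D M) la lc).sum := by
  intro la
  induction la with
  | nil => intro lc; simp
  | cons x t ih =>
    intro lc
    cases lc with
    | nil => simp
    | cons y tc => simpa using add_nonneg (D_nonneg hM x y) (ih tc)

theorem zip_triangle {M : ℝ} (hM : 0 ≤ M) (h2M : ∀ x y : X, dist x y ≤ 2 * M) :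
    ∀ (A B C : List (Option X)), A.length = B.length → B.length = C.length →
      (List.zipWith (D M) A C).sum ≤ (List.zipWith (D M) A B).sum + (List.zipWith (D M) B C).sum := by
  intro A
  induction A with
  | nil => intro B C _ _; simpa using zipD_sum_nonneg hM B C
  | cons u A' ih =>
    intro B C hAB hBC
    cases B with
    | nil => simp at hAB
    | cons v B' =>
      cases C with
      | nil => simp at hBC
      | cons w C' =>
        simp only [List.zipWith_cons_cons, List.sum_cons]
        have := ih B' C' (by simpa using hAB) (by simpa using hBC)
        have ht := D_triangle hM h2M u v w
        linarith

theorem master {M : ℝ} (hM : 0 ≤ M) (h2M : ∀ x y : X, dist x y ≤ 2 * M) :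
    ∀ (α γ : List (Option X)), α.length = γ.length →
      dE M (↑(α.filterMap id) : Multiset X) (↑(γ.filterMap id) : Multiset X) ≤ (List.zipWith (D M) α γ).sum := by
  intro α
  induction α with
  | nil =>
    intro γ hγ
    have : γ = [] := List.length_eq_zero_iff.mp hγ.symm
    subst this
    simp [dE_self hM]
  | cons u α' ih =>
    intro γ hγ
    cases γ with
    | nil => simp at hγ
    | cons v γ' =>
      have hlen : α'.length = γ'.length := by simpa using hγ
      have IH := ih γ' hlen
      rcases u with _ | x <;> rcases v with _ | y
      · -- none none
        have h1 : ((none : Option X) :: α').filterMap id = α'.filterMap id := by simp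
        have h2 : ((none : Option X) :: γ').filterMap id = γ'.filterMap id := by simp
        rw [h1, h2]
        have hD : D M (none : Option X) none = 0 := rfl
        simp only [List.zipWith_cons_cons, List.sum_cons, hD, zero_add]
        exact IH
      · -- none / some y
        have h1 : ((none : Option X) :: α').filterMap id = α'.filterMap id := by simp
        have h2 : ((some y : Option X) :: γ').filterMap id = y :: γ'.filterMap id := by simp
        rw [h1, h2, ← Multiset.cons_coe]
        have hD : D M (none : Option X) (some y) = M := rfl
        simp only [List.zipWith_cons_cons, List.sum_cons, hD]
        calc dE M (↑(α'.filterMap id) : Multiset X) (y ::ₘ (↑(γ'.filterMap id) : Multiset X))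
            ≤ dE M (↑(α'.filterMap id) : Multiset X) (↑(γ'.filterMap id) : Multiset X) + M := dE_cons_right hM h2M y _ _
          _ ≤ M + (List.zipWith (D M) α' γ').sum := by linarith
      · -- some x / none
        have h1 : ((some x : Option X) :: α').filterMap id = x :: α'.filterMap id := by simp
        have h2 : ((none : Option X) :: γ').filterMap id = γ'.filterMap id := by simp
        rw [h1, h2, ← Multiset.cons_coe]
        have hD : D M (some x) (none : Option X) = M := rfl
        simp only [List.zipWith_cons_cons, List.sum_cons, hD]
        calc dE M (x ::ₘ (↑(α'.filterMap id) : Multiset X)) (↑(γ'.filterMap id) : Multiset X)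
            ≤ dE M (↑(α'.filterMap id) : Multiset X) (↑(γ'.filterMap id) : Multiset X) + M := dE_cons_left hM h2M x _ _
          _ ≤ M + (List.zipWith (D M) α' γ').sum := by linarith
      · -- some x / some y
        have h1 : ((some x : Option X) :: α').filterMap id = x :: α'.filterMap id := by simp
        have h2 : ((some y : Option X) :: γ').filterMap id = y :: γ'.filterMap id := by simp
        rw [h1, h2, ← Multiset.cons_coe, ← Multiset.cons_coe]
        have hD : D M (some x) (some y) = dist x y := rfl
        simp only [List.zipWith_cons_cons, List.sum_cons, hD]
        calc dE M (x ::ₘ (↑(α'.filterMap id) : Multiset X)) (y ::ₘ (↑(γ'.filterMap id) : Multiset X))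
            ≤ dist x y + dE M (↑(α'.filterMap id) : Multiset X) (↑(γ'.filterMap id) : Multiset X) := dE_cons_cons M x y _ _
          _ ≤ dist x y + (List.zipWith (D M) α' γ').sum := by linarith

theorem dE_triangle {M : ℝ} (hM : 0 ≤ M) (h2M : ∀ x y : X, dist x y ≤ 2 * M)
    (a b c : Multiset X) : dE M a c ≤ dE M a b + dE M b c := by
  obtain ⟨la, lb, hla, hlb, e1⟩ := dE_mem M a b
  obtain ⟨lb', lc, hlb', hlc, e2⟩ := dE_mem M b c
  set N := max (max la.length lb.length) lc.length with hN
  have hle_a : la.length ≤ N := le_max_of_le_left (le_max_left _ _)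
  have hle_b : lb.length ≤ N := le_max_of_le_left (le_max_right _ _)
  have hle_c : lc.length ≤ N := le_max_right _ _
  have hbb' : lb'.Perm lb := Multiset.coe_eq_coe.mp (hlb'.trans hlb.symm)
  have hlb'len : lb'.length = lb.length := hbb'.length_eq
  set A := pad la (N - la.length) with hA
  set B := pad lb (N - lb.length) with hB
  set B' := pad lb' (N - lb.length) with hB'
  set C := pad lc (N - lc.length) with hC
  have hAlen : A.length = N := by rw [hA, pad_length]; omega
  have hBlen : B.length = N := by rw [hB, pad_length]; omega
  have hB'len : B'.length = N := by rw [hB', pad_length]; omega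
  have hClen : C.length = N := by rw [hC, pad_length]; omega
  have hpermB : B'.Perm B := ((hbb'.map some).append_right _)
  obtain ⟨C', hC'p, hC's⟩ := perm_zip (D M) hpermB C (by rw [hClen, hB'len])
  have hC'len : C'.length = N := hC'p.length_eq.trans hClen
  -- identify the multisets
  have hfA : (A.filterMap id : Multiset X) = a := by
    rw [hA, pad_filterMap, hla]
  have hfilterC' : (C'.filterMap id : Multiset X) = c := by
    have : (C'.filterMap id).Perm (C.filterMap id) := hC'p.filterMap id
    rw [Multiset.coe_eq_coe.mpr this, hC, pad_filterMap, hlc]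
  calc dE M a c = dE M (↑(A.filterMap id) : Multiset X) (↑(C'.filterMap id) : Multiset X) := by
        rw [hfA, hfilterC']
    _ ≤ (List.zipWith (D M) A C').sum := master hM h2M A C' (by rw [hAlen, hC'len])
    _ ≤ (List.zipWith (D M) A B).sum + (List.zipWith (D M) B C').sum :=
        zip_triangle hM h2M A B C' (by rw [hAlen, hBlen]) (by rw [hBlen, hC'len])
    _ = (List.zipWith (D M) A B).sum + (List.zipWith (D M) B' C).sum := by rw [hC's]
    _ = mcost M la lb + mcost M lb' lc := by
        rw [pad_cost M la lb _ _ (by omega), pad_cost M lb' lc _ _ (by omega)]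
    _ = dE M a b + dE M b c := by rw [e1, e2]

end DEwork

namespace DEwork
variable {X : Type*} [MetricSpace X]

theorem dE_singleton_empty (M : ℝ) (x : X) : dE M {x} (0 : Multiset X) = M := by
  rw [dE_eq]
  have hset : {r : ℝ | ∃ la lc : List X, (la : Multiset X) = {x} ∧ (lc : Multiset X) = 0 ∧
      r = mcost M la lc} = {M} := by
    ext r
    simp only [Set.mem_setOf_eq, Set.mem_singleton_iff]
    constructor
    · rintro ⟨la, lc, h1, h2, rfl⟩
      have ha : la = [x] := Multiset.coe_eq_singleton.mp h1
      have hc : lc = [] := (Multiset.coe_eq_zero lc).mp h2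
      subst ha hc
      simp [mcost]
    · rintro rfl
      exact ⟨[x], [], by simp, by simp, by simp [mcost]⟩
  rw [hset, csInf_singleton]

theorem dE_singleton_singleton (M : ℝ) (x y : X) : dE M ({x} : Multiset X) {y} = dist x y := by
  rw [dE_eq]
  have hset : {r : ℝ | ∃ la lc : List X, (la : Multiset X) = {x} ∧ (lc : Multiset X) = {y} ∧
      r = mcost M la lc} = {dist x y} := by
    ext r
    simp only [Set.mem_setOf_eq, Set.mem_singleton_iff]
    constructor
    · rintro ⟨la, lc, h1, h2, rfl⟩
      have ha : la = [x] := Multiset.coe_eq_singleton.mp h1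
      have hc : lc = [y] := Multiset.coe_eq_singleton.mp h2
      subst ha hc
      simp [mcost]
    · rintro rfl
      exact ⟨[x], [y], by simp, by simp, by simp [mcost]⟩
  rw [hset, csInf_singleton]

end DEwork

end

/-- If `d` is bounded then `d_E` is a metric on `E` iff `(sup d)/M ≤ 2`. -/
theorem stmt_1 {X : Type*} [MetricSpace X] [Nontrivial X] (M : ℝ) (hM : 0 < M)
    (hbdd : ∃ B : ℝ, ∀ x y : X, dist x y ≤ B) :
    IsMetric (dE (X := X) M) ↔ supD X / M ≤ 2 := by
  constructor
  · intro h
    have key : ∀ x y : X, dist x y ≤ 2 * M := by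
      intro x y
      have tri := h.2.2 ({x} : Multiset X) 0 {y}
      rw [DEwork.dE_singleton_singleton M x y, DEwork.dE_singleton_empty M x,
        DEwork.dE_comm M 0 {y}, DEwork.dE_singleton_empty M y] at tri
      linarith
    rw [div_le_iff₀ hM]
    refine csSup_le ?_ ?_
    · obtain ⟨x, y, _⟩ := exists_pair_ne X
      exact ⟨0, x, x, dist_self x⟩
    · rintro r ⟨x, y, rfl⟩
      linarith [key x y]
  · intro hθ
    obtain ⟨B, hB⟩ := hbdd
    have hbdd' : BddAbove {r : ℝ | ∃ x y : X, dist x y = r} := by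
      refine ⟨B, ?_⟩
      rintro r ⟨x, y, rfl⟩
      exact hB x y
    have h2M : ∀ x y : X, dist x y ≤ 2 * M := by
      intro x y
      have h1 : dist x y ≤ supD X := le_csSup hbdd' ⟨x, y, rfl⟩
      rw [div_le_iff₀ hM] at hθ
      linarith
    refine ⟨?_, fun a c => DEwork.dE_comm M a c, fun a b c => DEwork.dE_triangle hM.le h2M a b c⟩
    intro a c
    constructor
    · exact DEwork.dE_eq_zero hM
    · rintro rfl
      exact DEwork.dE_self hM.le a
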